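/- Let p be a prime and a, b positive integers with gcd(b, p) = 1. If φ(rad(b)) divides a, then b divides Ψ_b(p^a) = ((p^a)^b - 1)/(p^a - 1), where rad(b) is the product of the distinct primes dividing b and φ is Euler's totient function. -/
import Mathlib

lemma geom_split (n q m : ℕ) :
    ∑ i ∈ Finset.range (q * m), n ^ i
      = (∑ j ∈ Finset.range m, (n ^ q) ^ j) * (∑ k ∈ Finset.range q, n ^ k) := by
  induction m with
  | zero => simp
  | succ m ih =>
      rw [Nat.mul_succ, Finset.sum_range_add, ih, Finset.sum_range_succ, add_mul]
      congr 1
      rw [Finset.mul_sum, ← pow_mul]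
      exact Finset.sum_congr rfl fun k _ => by rw [← pow_add]

lemma key_dvd : ∀ b : ℕ, ∀ n : ℕ,
    (∀ q : ℕ, q.Prime → q ∣ b → n ≡ 1 [MOD q]) →
    b ∣ ∑ i ∈ Finset.range b, n ^ i := by
  intro b
  induction b using Nat.strong_induction_on with
  | _ b ih =>
    intro n hn
    rcases Nat.eq_zero_or_pos b with rfl | hb
    · simp
    by_cases hb1 : b = 1
    · simp [hb1]
    · have hb2 : 2 ≤ b := by omega
      set q := b.minFac with hq
      have hqp : q.Prime := Nat.minFac_prime hb1
      have hqdvd : q ∣ b := Nat.minFac_dvd b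
      obtain ⟨m, hm⟩ := hqdvd
      have hmpos : 0 < m := by
        rcases Nat.eq_zero_or_pos m with rfl | h; · omega
        · exact h
      have hmlt : m < b := by
        have : 2 ≤ q := hqp.two_le
        calc m < q * m := by nlinarith
        _ = b := hm.symm
      rw [hm, geom_split, mul_comm q m]
      apply mul_dvd_mul
      · apply ih m hmlt
        intro r hr hrm
        exact ((hn r hr (hm ▸ Dvd.dvd.mul_left hrm q)).pow q).trans (by simp [Nat.ModEq])
      · have h1 : n ≡ 1 [MOD q] := hn q hqp ⟨m, hm⟩
        have h1' : ((n : ZMod q)) = 1 := by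
          have := (ZMod.natCast_eq_natCast_iff n 1 q).2 h1
          simpa using this
        have : ((∑ k ∈ Finset.range q, n ^ k : ℕ) : ZMod q) = 0 := by
          push_cast
          simp [h1', ZMod.natCast_self]
        exact (ZMod.natCast_eq_zero_iff _ _).1 this

/-- If `p` is prime, `gcd(b,p)=1` and `φ(rad(b)) ∣ a`, then `b ∣ Ψ_b(p^a)`. -/
theorem dvd_psi_of_totient_radical_dvd (p : ℕ) (hp : p.Prime) (a b : ℕ)
    (ha : 0 < a) (hb : 0 < b) (hcop : Nat.Coprime b p)
    (hdvd : Nat.totient (∏ q ∈ b.primeFactors, q) ∣ a) :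
    b ∣ ∑ i ∈ Finset.range b, (p ^ a) ^ i := by
  apply key_dvd
  intro q hq hqb
  have hqmem : q ∈ b.primeFactors := Nat.mem_primeFactors.2 ⟨hq, hqb, hb.ne'⟩
  have hqrad : q ∣ ∏ r ∈ b.primeFactors, r := Finset.dvd_prod_of_mem _ hqmem
  have htot : q.totient ∣ a :=
    dvd_trans (Nat.totient_dvd_of_dvd hqrad) hdvd
  have hcq : Nat.Coprime p q := by
    have : Nat.Coprime q p := Nat.Coprime.coprime_dvd_left hqb hcop
    exact this.symm
  obtain ⟨t, ht⟩ := htot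
  have euler : p ^ q.totient ≡ 1 [MOD q] := Nat.ModEq.pow_totient hcq
  calc p ^ a = (p ^ q.totient) ^ t := by rw [← pow_mul, ht]
  _ ≡ 1 ^ t [MOD q] := euler.pow t
  _ = 1 := one_pow t
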